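/- arXiv:1603.05608 — 3 statements merged into one kernel-verified Lean document; each statement's English description precedes it below -/
import Mathlib

section
/- For complex z = x + iy with y > 0, |x| ≤ y, and any positive integer n, the sum ∑_{k≥1} |1/(n²z² - k²) + 1/k²| is at most 3n²y², provided 2n y ≤ 1 (so that |n²z²| ≤ k²/2 for all k ≥ 1). -/
theorem stmt3 (x y : ℝ) (z : ℂ) (hz : z = (x : ℂ) + (y : ℂ) * Complex.I)
    (hy : 0 < y) (hx : |x| ≤ y) (n : ℕ) (hn : 1 ≤ n) (hny : 2 * (n : ℝ) * y ≤ 1) :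
    ∑' k : ℕ+, ‖1 / ((n : ℂ) ^ 2 * z ^ 2 - ((k : ℕ) : ℂ) ^ 2) + 1 / ((k : ℕ) : ℂ) ^ 2‖ ≤
      3 * (n : ℝ) ^ 2 * y ^ 2 := by
  have hxx : x ^ 2 ≤ y ^ 2 := by nlinarith [sq_abs x, abs_nonneg x]
  have hnormz : ‖z‖ ^ 2 ≤ 2 * y ^ 2 := by
    have : ‖z‖ ^ 2 = x ^ 2 + y ^ 2 := by
      rw [hz, Complex.sq_norm, Complex.normSq_add_mul_I]
    linarith
  have hA : ‖(n : ℂ) ^ 2 * z ^ 2‖ ≤ 2 * (n : ℝ) ^ 2 * y ^ 2 := by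
    rw [norm_mul, norm_pow, norm_pow, Complex.norm_natCast]
    have hn0 : (0:ℝ) ≤ (n:ℝ)^2 := by positivity
    nlinarith [norm_nonneg z]
  have hreA : ((n : ℂ) ^ 2 * z ^ 2).re ≤ 0 := by
    rw [hz]
    have : (((n:ℂ))^2 * ((x:ℂ) + (y:ℂ)*Complex.I)^2).re = (n:ℝ)^2 * (x^2 - y^2) := by
      simp [pow_two, Complex.mul_re, Complex.add_re, Complex.add_im]
      try ring
    rw [this]
    nlinarith [sq_nonneg (n:ℝ)]
  have key : ∀ k : ℕ+, ‖1 / ((n : ℂ) ^ 2 * z ^ 2 - ((k : ℕ) : ℂ) ^ 2) + 1 / ((k : ℕ) : ℂ) ^ 2‖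
      ≤ 2 * (n : ℝ) ^ 2 * y ^ 2 / ((k : ℕ) : ℝ) ^ 4 := by
    intro k
    have hk : (0:ℝ) < ((k:ℕ):ℝ) := by exact_mod_cast k.pos
    have hden : ((k:ℕ):ℝ) ^ 2 ≤ ‖(n : ℂ) ^ 2 * z ^ 2 - ((k : ℕ) : ℂ) ^ 2‖ := by
      have hrew : ((n : ℂ) ^ 2 * z ^ 2 - ((k : ℕ) : ℂ) ^ 2).re
          = ((n : ℂ) ^ 2 * z ^ 2).re - ((k:ℕ):ℝ) ^ 2 := by
        simp [Complex.sub_re]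
        norm_cast
      calc ((k:ℕ):ℝ) ^ 2 ≤ |((n : ℂ) ^ 2 * z ^ 2 - ((k : ℕ) : ℂ) ^ 2).re| := by
            rw [hrew, abs_sub_comm]
            have h1 : ((k:ℕ):ℝ) ^ 2 ≤ ((k:ℕ):ℝ) ^ 2 - ((n : ℂ) ^ 2 * z ^ 2).re := by linarith
            exact h1.trans (le_abs_self _)
        _ ≤ ‖(n : ℂ) ^ 2 * z ^ 2 - ((k : ℕ) : ℂ) ^ 2‖ := Complex.abs_re_le_norm _
    have hne : (n : ℂ) ^ 2 * z ^ 2 - ((k : ℕ) : ℂ) ^ 2 ≠ 0 := by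
      intro h
      rw [h, norm_zero] at hden
      nlinarith [hk]
    have hk0 : ((k:ℕ):ℂ) ≠ 0 := by exact_mod_cast hk.ne'
    have heq : 1 / ((n : ℂ) ^ 2 * z ^ 2 - ((k : ℕ) : ℂ) ^ 2) + 1 / ((k : ℕ) : ℂ) ^ 2
        = ((n : ℂ) ^ 2 * z ^ 2) / (((n : ℂ) ^ 2 * z ^ 2 - ((k : ℕ) : ℂ) ^ 2) * ((k : ℕ) : ℂ) ^ 2) := by
      field_simp
      ring
    rw [heq]
    have hnorm : ‖(n : ℂ) ^ 2 * z ^ 2 / (((n : ℂ) ^ 2 * z ^ 2 - ((k : ℕ) : ℂ) ^ 2) * ((k : ℕ) : ℂ) ^ 2)‖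
        = ‖(n : ℂ) ^ 2 * z ^ 2‖ / (‖(n : ℂ) ^ 2 * z ^ 2 - ((k : ℕ) : ℂ) ^ 2‖ * ((k:ℕ):ℝ) ^ 2) := by
      rw [norm_div, norm_mul ((n : ℂ) ^ 2 * z ^ 2 - ((k : ℕ) : ℂ) ^ 2), norm_pow,
        Complex.norm_natCast]
    rw [hnorm, div_le_div_iff₀ (mul_pos ((pow_pos hk 2).trans_le hden) (pow_pos hk 2))
      (pow_pos hk 4)]
    have hnn : (0:ℝ) ≤ ‖(n : ℂ) ^ 2 * z ^ 2 - ((k : ℕ) : ℂ) ^ 2‖ := norm_nonneg _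
    calc ‖(n : ℂ) ^ 2 * z ^ 2‖ * ((k:ℕ):ℝ) ^ 4
        ≤ (2 * (n : ℝ) ^ 2 * y ^ 2) * ((k:ℕ):ℝ) ^ 4 := by
          have := pow_pos hk 4
          nlinarith
      _ = (2 * (n : ℝ) ^ 2 * y ^ 2) * ((k:ℕ):ℝ)^2 * ((k:ℕ):ℝ)^2 := by ring
      _ ≤ (2 * (n : ℝ) ^ 2 * y ^ 2) * ((k:ℕ):ℝ)^2 * ‖(n : ℂ) ^ 2 * z ^ 2 - ((k : ℕ) : ℂ) ^ 2‖ := by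
          have h0 : (0:ℝ) ≤ (2 * (n : ℝ) ^ 2 * y ^ 2) * ((k:ℕ):ℝ)^2 := by positivity
          exact mul_le_mul_of_nonneg_left hden h0
      _ = 2 * (n : ℝ) ^ 2 * y ^ 2 * (‖(n : ℂ) ^ 2 * z ^ 2 - ((k : ℕ) : ℂ) ^ 2‖ * ((k:ℕ):ℝ)^2) := by
          ring
  -- sum of the majorant
  have hzeta : HasSum (fun k : ℕ+ => (1:ℝ) / ((k:ℕ):ℝ) ^ 4) (Real.pi ^ 4 / 90) := by
    have hinj : Function.Injective (fun k : ℕ+ => (k : ℕ)) := fun a b h => PNat.coe_injective h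
    have h0 : ∀ m : ℕ, m ∉ Set.range (fun k : ℕ+ => (k : ℕ)) → (1:ℝ) / (m:ℝ) ^ 4 = 0 := by
      intro m hm
      have : m = 0 := by
        by_contra h0
        exact hm ⟨⟨m, Nat.pos_of_ne_zero h0⟩, rfl⟩
      simp [this]
    exact (hinj.hasSum_iff h0).mpr hasSum_zeta_four
  have hmaj : HasSum (fun k : ℕ+ => 2 * (n : ℝ) ^ 2 * y ^ 2 / ((k:ℕ):ℝ) ^ 4)
      (2 * (n : ℝ) ^ 2 * y ^ 2 * (Real.pi ^ 4 / 90)) := by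
    have := hzeta.mul_left (2 * (n : ℝ) ^ 2 * y ^ 2)
    simpa [mul_one_div, div_eq_mul_inv] using this
  have hsummable : Summable (fun k : ℕ+ =>
      ‖1 / ((n : ℂ) ^ 2 * z ^ 2 - ((k : ℕ) : ℂ) ^ 2) + 1 / ((k : ℕ) : ℂ) ^ 2‖) :=
    Summable.of_nonneg_of_le (fun k => norm_nonneg _) key hmaj.summable
  calc ∑' k : ℕ+, ‖1 / ((n : ℂ) ^ 2 * z ^ 2 - ((k : ℕ) : ℂ) ^ 2) + 1 / ((k : ℕ) : ℂ) ^ 2‖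
      ≤ ∑' k : ℕ+, 2 * (n : ℝ) ^ 2 * y ^ 2 / ((k:ℕ):ℝ) ^ 4 :=
        Summable.tsum_le_tsum key hsummable hmaj.summable
    _ = 2 * (n : ℝ) ^ 2 * y ^ 2 * (Real.pi ^ 4 / 90) := hmaj.tsum_eq
    _ ≤ 3 * (n : ℝ) ^ 2 * y ^ 2 := by
        have hpi : Real.pi < 3.15 := Real.pi_lt_d2
        have hpi0 : 0 < Real.pi := Real.pi_pos
        have hn0 : (0:ℝ) ≤ (n:ℝ)^2 * y^2 := by positivity
        have hpi2 : Real.pi ^ 2 < 10 := by nlinarith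
        have hpi4 : Real.pi ^ 4 < 100 := by nlinarith
        nlinarith [hn0, hpi4]
end

section
/- Let A, B be such that 2A ∈ ℕ, 2B ∈ ℤ, and A+B is a positive integer, and let h_{A,B}(q) = ∑_{n≥1} (-1)^n q^{An²+Bn}/(1-q^n) for |q| < 1. Then for q = e^{2πiz} with z = x+iy, y > 0 and y ≤ |x| ≤ 1/2 - y, there is an absolute constant C (depending only on A, B) with |h_{A,B}(q)| ≤ C·y^{-3/2}. -/
private lemma key_inv_bound (t : ℝ) (ht : 0 < t) :
    (Real.exp t - 1)⁻¹ ≤ 3 * (t * Real.sqrt t)⁻¹ := by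
  have hst : 0 < Real.sqrt t := Real.sqrt_pos.2 ht
  have h1 : Real.sqrt (t / 2) ≤ Real.exp (t / 2) := by
    have h := Real.add_one_le_exp (t / 2)
    nlinarith [Real.sq_sqrt (by positivity : (0:ℝ) ≤ t / 2), Real.sqrt_nonneg (t / 2)]
  have h2 : t / 2 ≤ Real.exp (t / 2) - 1 := by linarith [Real.add_one_le_exp (t / 2)]
  have h3 : Real.exp (t / 2) * (Real.exp (t / 2) - 1) ≤ Real.exp t - 1 := by
    have he : Real.exp (t / 2) * Real.exp (t / 2) = Real.exp t := by
      rw [← Real.exp_add]; ring_nf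
    nlinarith [Real.one_le_exp (by positivity : (0:ℝ) ≤ t / 2)]
  have hlow : Real.sqrt (t / 2) * (t / 2) ≤ Real.exp t - 1 := by
    have := mul_le_mul h1 h2 (by linarith) (Real.exp_nonneg _)
    linarith
  have hs2pos : (0:ℝ) < Real.sqrt 2 := Real.sqrt_pos.2 (by norm_num)
  have h2sqrt : Real.sqrt 2 ≤ 3 / 2 := by
    nlinarith [Real.sq_sqrt (by norm_num : (0:ℝ) ≤ 2), Real.sqrt_nonneg 2]
  have hdiv : Real.sqrt (t / 2) = Real.sqrt t / Real.sqrt 2 := Real.sqrt_div ht.le 2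
  have e1 : Real.sqrt t / Real.sqrt 2 * (t / 2) = t * Real.sqrt t / (2 * Real.sqrt 2) := by
    field_simp
  have hlow2 : t * Real.sqrt t / 3 ≤ Real.exp t - 1 := by
    rw [hdiv, e1] at hlow
    have : t * Real.sqrt t / 3 ≤ t * Real.sqrt t / (2 * Real.sqrt 2) := by
      gcongr
      linarith
    linarith
  have hthird : (0:ℝ) < t * Real.sqrt t / 3 := by positivity
  calc (Real.exp t - 1)⁻¹ ≤ (t * Real.sqrt t / 3)⁻¹ := by
        apply inv_anti₀ hthird hlow2
    _ = 3 * (t * Real.sqrt t)⁻¹ := by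
        rw [inv_div, div_eq_mul_inv]

private lemma rpow_32 (t : ℝ) (ht : 0 < t) :
    t ^ (-(3 / 2 : ℝ)) = (t * Real.sqrt t)⁻¹ := by
  rw [Real.rpow_neg ht.le]
  congr 1
  rw [show (3 / 2 : ℝ) = 1 + 1 / 2 by norm_num, Real.rpow_add ht, Real.rpow_one,
    ← Real.sqrt_eq_rpow]

/-- Bound for `h_{A,B}(q) = ∑_{n≥1} (-1)^n q^{An²+Bn}/(1-q^n)` away from the dominant
poles, where `q = e^{2πiz}`, `z = x+iy` with `y ≤ |x| ≤ 1/2 - y`.  Here `2A ∈ ℕ`,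
`2B ∈ ℤ` and `A+B` is a positive integer. -/
theorem stmt4 (A B : ℝ) (a : ℕ) (b : ℤ) (c : ℕ)
    (ha : 2 * A = (a : ℝ)) (hb : 2 * B = (b : ℝ)) (hc : 0 < c) (hAB : A + B = (c : ℝ)) :
    ∃ C : ℝ, ∀ x y : ℝ, 0 < y → y ≤ |x| → |x| ≤ 1 / 2 - y →
      ‖∑' n : ℕ+, (-1 : ℂ) ^ (n : ℕ) *
          Complex.exp (2 * Real.pi * Complex.I * ((x : ℂ) + (y : ℂ) * Complex.I) *
            ((A * ((n : ℕ) : ℝ) ^ 2 + B * ((n : ℕ) : ℝ) : ℝ) : ℂ)) /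
          (1 - Complex.exp (2 * Real.pi * Complex.I * ((x : ℂ) + (y : ℂ) * Complex.I)) ^ (n : ℕ))‖ ≤
        C * y ^ (-(3 / 2 : ℝ)) := by
  -- the sum of the majorant series
  set S : ℝ := ∑' n : ℕ+, ((n : ℕ) : ℝ) ^ (-(3 / 2 : ℝ)) with hS_def
  have hSsummable : Summable (fun n : ℕ+ => ((n : ℕ) : ℝ) ^ (-(3 / 2 : ℝ))) := by
    have h : Summable (fun n : ℕ => (n : ℝ) ^ (-(3 / 2 : ℝ))) :=
      Real.summable_nat_rpow.2 (by norm_num)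
    exact h.comp_injective PNat.coe_injective
  refine ⟨3 * S, fun x y hy hx1 hx2 => ?_⟩
  have hπ : (0:ℝ) < Real.pi := Real.pi_pos
  set f : ℕ+ → ℂ := fun n => (-1 : ℂ) ^ (n : ℕ) *
      Complex.exp (2 * Real.pi * Complex.I * ((x : ℂ) + (y : ℂ) * Complex.I) *
        ((A * ((n : ℕ) : ℝ) ^ 2 + B * ((n : ℕ) : ℝ) : ℝ) : ℂ)) /
      (1 - Complex.exp (2 * Real.pi * Complex.I * ((x : ℂ) + (y : ℂ) * Complex.I)) ^ (n : ℕ))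
    with hf_def
  -- norm of the exponential
  have hnormexp : ∀ w : ℝ, ‖Complex.exp (2 * Real.pi * Complex.I *
      ((x : ℂ) + (y : ℂ) * Complex.I) * (w : ℂ))‖ = Real.exp (-(2 * Real.pi * y * w)) := by
    intro w
    rw [Complex.norm_exp]
    congr 1
    simp [Complex.mul_re, Complex.mul_im]
    try ring
  have hA : 0 ≤ A := by
    have : (0:ℝ) ≤ (a : ℝ) := Nat.cast_nonneg a
    linarith
  have hcge : (1:ℝ) ≤ (c : ℝ) := by exact_mod_cast hc
  -- bound on each term
  have hterm : ∀ n : ℕ+, ‖f n‖ ≤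
      3 * ((n : ℕ) : ℝ) ^ (-(3 / 2 : ℝ)) * y ^ (-(3 / 2 : ℝ)) := by
    intro n
    have hn1 : (1:ℝ) ≤ ((n : ℕ) : ℝ) := by exact_mod_cast n.one_le
    have hnpos : (0:ℝ) < ((n : ℕ) : ℝ) := by linarith
    set N : ℝ := ((n : ℕ) : ℝ)
    set w : ℝ := A * N ^ 2 + B * N with hw_def
    have hwge : N ≤ w := by
      have h1' : 0 ≤ A * N * (N - 1) := mul_nonneg (mul_nonneg hA hnpos.le) (by linarith)
      have h2' : 0 ≤ (A + B - 1) * N := mul_nonneg (by linarith) hnpos.le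
      rw [hw_def]
      nlinarith [h1', h2']
    set t : ℝ := 2 * Real.pi * y * N with ht_def
    have htpos : 0 < t := by positivity
    -- numerator norm
    have hnum : ‖(-1 : ℂ) ^ (n : ℕ) * Complex.exp (2 * Real.pi * Complex.I *
        ((x : ℂ) + (y : ℂ) * Complex.I) * ((w : ℝ) : ℂ))‖ = Real.exp (-(2 * Real.pi * y * w)) := by
      rw [norm_mul, norm_pow, norm_neg, norm_one, one_pow, one_mul, hnormexp w]
    -- denominator lower bound
    have hq : ‖Complex.exp (2 * Real.pi * Complex.I * ((x : ℂ) + (y : ℂ) * Complex.I)) ^ (n : ℕ)‖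
        = Real.exp (-(2 * Real.pi * y * N)) := by
      rw [norm_pow]
      have := hnormexp 1
      rw [Complex.ofReal_one, mul_one] at this
      rw [this, ← Real.exp_nat_mul]
      congr 1
      push_cast
      ring
    have hden : 1 - Real.exp (-t) ≤
        ‖1 - Complex.exp (2 * Real.pi * Complex.I * ((x : ℂ) + (y : ℂ) * Complex.I)) ^ (n : ℕ)‖ := by
      have h := norm_sub_norm_le (1 : ℂ)
        (Complex.exp (2 * Real.pi * Complex.I * ((x : ℂ) + (y : ℂ) * Complex.I)) ^ (n : ℕ))
      rw [norm_one, hq] at h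
      exact h
    have hdenpos : (0:ℝ) < 1 - Real.exp (-t) := by
      have : Real.exp (-t) < 1 := Real.exp_lt_one_iff.2 (by linarith)
      linarith
    have hfn : ‖f n‖ ≤ Real.exp (-t) / (1 - Real.exp (-t)) := by
      rw [hf_def]
      simp only []
      rw [norm_div, hnum]
      apply div_le_div₀ (Real.exp_nonneg _) ?_ hdenpos hden
      apply Real.exp_le_exp.2
      have hyw : 2 * Real.pi * y * N ≤ 2 * Real.pi * y * w := by
        apply mul_le_mul_of_nonneg_left hwge (by positivity)
      linarith
    have heq : Real.exp (-t) / (1 - Real.exp (-t)) = (Real.exp t - 1)⁻¹ := by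
      rw [Real.exp_neg]
      have h1 : Real.exp t ≠ 0 := (Real.exp_pos t).ne'
      have h2 : Real.exp t - 1 ≠ 0 := by
        rw [Real.exp_neg] at hdenpos
        have : 1 < Real.exp t := by
          linarith [Real.add_one_le_exp t]
        linarith
      field_simp
    have hkey : ‖f n‖ ≤ 3 * (t * Real.sqrt t)⁻¹ := by
      calc ‖f n‖ ≤ Real.exp (-t) / (1 - Real.exp (-t)) := hfn
        _ = (Real.exp t - 1)⁻¹ := heq
        _ ≤ 3 * (t * Real.sqrt t)⁻¹ := key_inv_bound t htpos
    -- compare t^{-3/2} with y^{-3/2} n^{-3/2}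
    have hsplit : (t * Real.sqrt t)⁻¹ ≤ N ^ (-(3 / 2 : ℝ)) * y ^ (-(3 / 2 : ℝ)) := by
      rw [← rpow_32 t htpos, ht_def]
      have hyN : (0:ℝ) < y * N := by positivity
      have e2 : 2 * Real.pi * y * N = (2 * Real.pi) * (y * N) := by ring
      rw [e2, Real.mul_rpow (by positivity) (by positivity),
        Real.mul_rpow hy.le hnpos.le]
      have h2π : (2 * Real.pi) ^ (-(3 / 2 : ℝ)) ≤ 1 :=
        Real.rpow_le_one_of_one_le_of_nonpos (by linarith [Real.pi_gt_three]) (by norm_num)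
      have hyp : (0:ℝ) < y ^ (-(3 / 2 : ℝ)) := Real.rpow_pos_of_pos hy _
      have hNp : (0:ℝ) < N ^ (-(3 / 2 : ℝ)) := Real.rpow_pos_of_pos hnpos _
      calc (2 * Real.pi) ^ (-(3 / 2 : ℝ)) * (y ^ (-(3 / 2 : ℝ)) * N ^ (-(3 / 2 : ℝ)))
          ≤ 1 * (y ^ (-(3 / 2 : ℝ)) * N ^ (-(3 / 2 : ℝ))) := by
            apply mul_le_mul_of_nonneg_right h2π (by positivity)
        _ = N ^ (-(3 / 2 : ℝ)) * y ^ (-(3 / 2 : ℝ)) := by ring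
    calc ‖f n‖ ≤ 3 * (t * Real.sqrt t)⁻¹ := hkey
      _ ≤ 3 * (N ^ (-(3 / 2 : ℝ)) * y ^ (-(3 / 2 : ℝ))) := by linarith
      _ = 3 * N ^ (-(3 / 2 : ℝ)) * y ^ (-(3 / 2 : ℝ)) := by ring
  -- sum up
  have hgsummable : Summable (fun n : ℕ+ =>
      3 * ((n : ℕ) : ℝ) ^ (-(3 / 2 : ℝ)) * y ^ (-(3 / 2 : ℝ))) := by
    exact (hSsummable.mul_left 3).mul_right _
  have hnormsummable : Summable (fun n : ℕ+ => ‖f n‖) :=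
    Summable.of_nonneg_of_le (fun n => norm_nonneg _) hterm hgsummable
  calc ‖∑' n : ℕ+, f n‖ ≤ ∑' n : ℕ+, ‖f n‖ := norm_tsum_le_tsum_norm hnormsummable
    _ ≤ ∑' n : ℕ+, 3 * ((n : ℕ) : ℝ) ^ (-(3 / 2 : ℝ)) * y ^ (-(3 / 2 : ℝ)) :=
        Summable.tsum_le_tsum hterm hnormsummable hgsummable
    _ = 3 * S * y ^ (-(3 / 2 : ℝ)) := by
        rw [tsum_mul_right, tsum_mul_left]
end

section
/- For q = e^{2πiz} in the upper half plane, the two-variable spt-crank generating function satisfies S_{C₁}(z₀,q) = (1/((1−z₀)(1−z₀⁻¹)))·(R(z₀,q²) − (q;q²)_∞ C(z₀,q)) equals (1/(q²;q²)_∞) ∑_{n≥1} (-1)^{n-1} ( q^{n(n+1)/2}(1+q^n)/((1−z₀q^n)(1−q^n/z₀)) − q^{3n²+n}(1+q^{2n})/((1−z₀q^{2n})(1−q^{2n}/z₀)) ), where R and C have the Lambert series expansions R(z₀,q) = (1−z₀)/(q;q)_∞ ∑_{n∈ℤ} (-1)^n q^{n(3n+1)/2}/(1−z₀q^n)-type and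 C(z₀,q) = ((1−z₀)/(q;q)_∞) ∑_{n∈ℤ} (-1)^n q^{n(n+1)/2}/(1−z₀q^n)-type standard expansions. -/
open Filter Topology

lemma log_summable {f : ℕ → ℂ} (hf : Summable f) :
    Summable fun n => Complex.log (1 + f n) := by
  have h0 : Tendsto (fun n => ‖f n‖) atTop (𝓝 0) := by
    simpa using hf.tendsto_atTop_zero.norm
  have hev : ∀ᶠ n in atTop, ‖f n‖ ≤ 1/2 :=
    (h0.eventually_lt_const (by norm_num : (0:ℝ) < 1/2)).mono fun n h => h.le
  apply Summable.of_norm_bounded_eventually_nat (g := fun n => 3/2 * ‖f n‖)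
    ((summable_norm_iff.mpr hf).mul_left _)
  filter_upwards [hev] with n hn
  exact Complex.norm_log_one_add_half_le_self hn

lemma tprod_one_add' {f : ℕ → ℂ} (hf : Summable f) (h1 : ∀ n, 1 + f n ≠ 0) :
    Multipliable (fun n => 1 + f n) ∧ (∏' n, (1 + f n)) ≠ 0 := by
  have hlog : Summable (fun n => Complex.log (1 + f n)) := log_summable hf
  have hm : Multipliable (fun n => 1 + f n) :=
    Complex.multipliable_of_summable_log hlog
  refine ⟨hm, ?_⟩
  have := Complex.cexp_tsum_eq_tprod (f := fun n => 1 + f n) h1 hlog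
  rw [← this]
  exact Complex.exp_ne_zero _

lemma tprod_one_sub {f : ℕ → ℂ} (hf : Summable f) (h1 : ∀ n, ‖f n‖ < 1) :
    Multipliable (fun n => 1 - f n) ∧ (∏' n, (1 - f n)) ≠ 0 := by
  have h1' : ∀ n, 1 + (-f n) ≠ 0 := by
    intro n h
    have hfn : f n = 1 := by linear_combination -h
    have h2 := h1 n
    rw [hfn] at h2; simp at h2
  have := tprod_one_add' hf.neg h1'
  simpa [sub_eq_add_neg] using this

lemma tri_even (n : ℕ) : ∃ a, n * (n + 1) = 2 * a := by
  obtain ⟨r, hr⟩ := Nat.even_mul_succ_self n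
  exact ⟨r, by omega⟩

lemma pent_even (n : ℕ) : ∃ a, n * (3 * n + 1) = 2 * a := by
  obtain ⟨a, ha⟩ := tri_even n
  refine ⟨a + n ^ 2, ?_⟩
  have h : n * (3 * n + 1) = n * (n + 1) + 2 * n ^ 2 := by ring
  rw [h, ha]; ring

lemma eC_nat (n : ℕ) : ((n : ℤ) * ((n : ℤ) + 1) / 2).toNat = n * (n + 1) / 2 := by
  have h : (n : ℤ) * ((n : ℤ) + 1) = ((n * (n + 1) : ℕ) : ℤ) := by push_cast; ring
  rw [h]
  generalize n * (n + 1) = a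
  omega

lemma eC_neg (n : ℕ) : ((-((n : ℤ) + 1)) * (-((n : ℤ) + 1) + 1) / 2).toNat = n * (n + 1) / 2 := by
  have h : (-((n : ℤ) + 1)) * (-((n : ℤ) + 1) + 1) = ((n * (n + 1) : ℕ) : ℤ) := by push_cast; ring
  rw [h]
  generalize n * (n + 1) = a
  omega

lemma eR_nat (n : ℕ) : ((n : ℤ) * (3 * (n : ℤ) + 1) / 2).toNat = n * (3 * n + 1) / 2 := by
  have h : (n : ℤ) * (3 * (n : ℤ) + 1) = ((n * (3 * n + 1) : ℕ) : ℤ) := by push_cast; ring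
  rw [h]
  generalize n * (3 * n + 1) = a
  omega

lemma eR_neg (n : ℕ) :
    ((-((n : ℤ) + 1)) * (3 * (-((n : ℤ) + 1)) + 1) / 2).toNat = (n + 1) * (3 * n + 2) / 2 := by
  have h : (-((n : ℤ) + 1)) * (3 * (-((n : ℤ) + 1)) + 1) = (((n + 1) * (3 * n + 2) : ℕ) : ℤ) := by
    push_cast; ring
  rw [h]
  generalize (n + 1) * (3 * n + 2) = a
  omega

lemma cast_succ (n : ℕ) : ((n : ℤ) + 1) = ((n + 1 : ℕ) : ℤ) := by push_cast; ring

lemma eC_sym (n : ℕ) :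
    ((-((n : ℤ) + 1)) * (-((n : ℤ) + 1) + 1) / 2).toNat + (n + 1)
      = (((n : ℤ) + 1) * (((n : ℤ) + 1) + 1) / 2).toNat := by
  rw [eC_neg n, cast_succ, eC_nat (n + 1)]
  obtain ⟨a, ha⟩ := tri_even n
  have h3 : (n + 1) * ((n + 1) + 1) = n * (n + 1) + 2 * (n + 1) := by ring
  rw [ha] at h3
  rw [ha, h3]
  omega

lemma eC_grow (n : ℕ) : n ≤ ((n : ℤ) * ((n : ℤ) + 1) / 2).toNat := by
  rw [eC_nat]
  obtain ⟨a, ha⟩ := tri_even n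
  have h2 : 2 * n ≤ n * (n + 1) := by nlinarith
  rw [ha] at h2 ⊢
  omega

lemma eR_sym (n : ℕ) :
    ((-((n : ℤ) + 1)) * (3 * (-((n : ℤ) + 1)) + 1) / 2).toNat + (n + 1)
      = ((((n : ℤ) + 1)) * (3 * (((n : ℤ) + 1)) + 1) / 2).toNat := by
  rw [eR_neg n, cast_succ, eR_nat (n + 1)]
  obtain ⟨a, ha⟩ := tri_even n
  have h1 : (n + 1) * (3 * n + 2) = n * (n + 1) + 2 * (n + 1) ^ 2 := by ring
  have h2 : (n + 1) * (3 * (n + 1) + 1) = n * (n + 1) + 2 * (n + 1) ^ 2 + 2 * (n + 1) := by ring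
  rw [ha] at h1 h2
  rw [h1, h2]
  omega

lemma eR_grow (n : ℕ) : n ≤ ((n : ℤ) * (3 * (n : ℤ) + 1) / 2).toNat := by
  rw [eR_nat]
  obtain ⟨a, ha⟩ := pent_even n
  have h2 : 2 * n ≤ n * (3 * n + 1) := by nlinarith
  rw [ha] at h2 ⊢
  omega

lemma eR_double (n : ℕ) : 2 * (n * (3 * n + 1) / 2) = 3 * n ^ 2 + n := by
  obtain ⟨a, ha⟩ := pent_even n
  have h : 3 * n ^ 2 + n = n * (3 * n + 1) := by ring
  rw [h, ha]
  omega


section Key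

lemma pair_aux (z N E c : ℂ) (hz0 : z ≠ 0) (hd1 : 1 - z * N ≠ 0) (hd2 : 1 - N / z ≠ 0) :
    c * E / (1 - z * N) + -c * E / (z * (1 - N / z))
      = (1 - z⁻¹) * (c * (E * (1 + N) / ((1 - z * N) * (1 - N / z)))) := by
  have hzN : z - N ≠ 0 := by
    intro h
    apply hd2
    have : z = N := by linear_combination h
    rw [this, div_self (this ▸ hz0)]
    ring
  field_simp
  ring

variable {z Q : ℂ}

lemma key (hQ1 : ‖Q‖ < 1) (hQ0 : Q ≠ 0) (hz0 : z ≠ 0)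
    (hd1 : ∀ n : ℕ, 1 - z * Q ^ n ≠ 0) (hd2 : ∀ n : ℕ, 1 - Q ^ (n + 1) / z ≠ 0)
    (e : ℤ → ℕ) (he0 : e 0 = 0)
    (hsym : ∀ n : ℕ, e (-(n + 1) : ℤ) + (n + 1) = e ((n : ℤ) + 1))
    (hgrow : ∀ n : ℕ, n ≤ e (n : ℤ)) :
    Summable (fun n : ℕ+ => (-1 : ℂ) ^ (n : ℕ) *
      (Q ^ e ((n : ℕ) : ℤ) * (1 + Q ^ (n : ℕ)) /
        ((1 - z * Q ^ (n : ℕ)) * (1 - Q ^ (n : ℕ) / z)))) ∧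
    ∑' m : ℤ, (-1 : ℂ) ^ m * Q ^ e m / (1 - z * Q ^ m)
      = 1 / (1 - z) + (1 - z⁻¹) * ∑' n : ℕ+, (-1 : ℂ) ^ (n : ℕ) *
          (Q ^ e ((n : ℕ) : ℤ) * (1 + Q ^ (n : ℕ)) /
            ((1 - z * Q ^ (n : ℕ)) * (1 - Q ^ (n : ℕ) / z))) := by
  have hz1 : (1 : ℂ) - z ≠ 0 := by simpa using hd1 0
  have hzinv : (1 : ℂ) - z⁻¹ ≠ 0 := by
    have : (1 : ℂ) - z⁻¹ = -(1 - z) / z := by field_simp; ring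
    rw [this]
    exact div_ne_zero (neg_ne_zero.mpr hz1) hz0
  set F : ℤ → ℂ := fun m => (-1 : ℂ) ^ m * Q ^ e m / (1 - z * Q ^ m) with hF
  set Fn : ℕ → ℂ := fun k => (-1 : ℂ) ^ k * Q ^ e (k : ℤ) / (1 - z * Q ^ k) with hFn
  set G : ℕ → ℂ := fun k => -((-1 : ℂ) ^ k) * Q ^ e (k : ℤ) / (z * (1 - Q ^ k / z)) with hG
  set H : ℕ → ℂ := fun k => (-1 : ℂ) ^ k *
      (Q ^ e (k : ℤ) * (1 + Q ^ k) / ((1 - z * Q ^ k) * (1 - Q ^ k / z))) with hH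
  have hFnat : ∀ k : ℕ, F (k : ℤ) = Fn k := by
    intro k; simp only [hF, hFn, zpow_natCast]
  -- positive side summable
  have hgeo : Summable fun n : ℕ => (‖Q‖ : ℝ) ^ n :=
    summable_geometric_of_lt_one (norm_nonneg Q) hQ1
  have hQpow : ∀ (a : ℂ), Tendsto (fun n : ℕ => ‖a * Q ^ n‖) atTop (𝓝 0) := by
    intro a
    have := (tendsto_pow_atTop_nhds_zero_of_norm_lt_one hQ1).const_mul a
    simpa using this.norm
  have hpowle : ∀ {m n : ℕ}, n ≤ m → ‖Q‖ ^ m ≤ ‖Q‖ ^ n := fun h =>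
    pow_le_pow_of_le_one (norm_nonneg Q) hQ1.le h
  have hpos : Summable Fn := by
    apply Summable.of_norm_bounded_eventually_nat (g := fun n => 2 * ‖Q‖ ^ n) (hgeo.mul_left 2)
    have hev : ∀ᶠ n in atTop, ‖z * Q ^ n‖ ≤ 1 / 2 :=
      ((hQpow z).eventually_lt_const (by norm_num : (0:ℝ) < 1/2)).mono fun n h => h.le
    filter_upwards [hev] with n hn
    have hden : (1:ℝ) / 2 ≤ ‖1 - z * Q ^ n‖ := by
      have := norm_sub_norm_le (1 : ℂ) (z * Q ^ n)
      simp only [norm_one] at this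
      linarith
    have : ‖Fn n‖ = ‖Q‖ ^ e (n : ℤ) / ‖1 - z * Q ^ n‖ := by
      simp [hFn, norm_div, norm_mul, norm_pow]
    rw [this]
    calc ‖Q‖ ^ e (n : ℤ) / ‖1 - z * Q ^ n‖ ≤ ‖Q‖ ^ e (n : ℤ) / (1/2) :=
          div_le_div_of_nonneg_left (pow_nonneg (norm_nonneg Q) _) (by norm_num) hden
      _ = 2 * ‖Q‖ ^ e (n : ℤ) := by ring
      _ ≤ 2 * ‖Q‖ ^ n := by
          have := hpowle (hgrow n)
          linarith
  -- F at negative integers equals G at positives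
  have hQn0 : ∀ k : ℕ, Q ^ k ≠ 0 := fun k => pow_ne_zero k hQ0
  have hFG : ∀ n : ℕ, F (-(n + 1)) = G (n + 1) := by
    intro n
    have he : e (-(n + 1) : ℤ) + (n + 1) = e ((n + 1 : ℕ) : ℤ) := by
      rw [hsym n]; norm_num
    have hpow : Q ^ e (-(n + 1) : ℤ) * Q ^ (n + 1) = Q ^ e ((n + 1 : ℕ) : ℤ) := by
      rw [← pow_add, he]
    have hcast : (-(n + 1) : ℤ) = -(((n + 1 : ℕ)) : ℤ) := by push_cast; ring
    have hneg1 : ((-1 : ℂ)) ^ (-(n + 1) : ℤ) = (-1 : ℂ) ^ (n + 1) := by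
      rw [hcast, zpow_neg, zpow_natCast, ← inv_pow, inv_neg, inv_one]
    have hQz : (Q : ℂ) ^ (-(n + 1) : ℤ) = (Q ^ (n + 1))⁻¹ := by
      rw [hcast, zpow_neg, zpow_natCast]
    simp only [hF, hG, hneg1, hQz]
    have hd2' : 1 - Q ^ (n + 1) / z ≠ 0 := hd2 n
    set A := Q ^ e (-(↑n + 1) : ℤ) with hA
    set B := Q ^ e (((n + 1 : ℕ)) : ℤ) with hB
    set N := Q ^ (n + 1) with hN
    have hN0 : N ≠ 0 := hQn0 (n + 1)
    have hdz : 1 - z * N⁻¹ ≠ 0 := by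
      intro h
      apply hd2'
      have h2 : z = N := by
        field_simp at h
        linear_combination -h
      rw [h2, div_self hN0]
      ring
    have hpow' : A * N = B := hpow
    rw [div_eq_div_iff hdz (mul_ne_zero hz0 hd2'), ← hpow']
    have h1 : z * (1 - N / z) = z - N := by field_simp
    have h2 : N * (1 - z * N⁻¹) = N - z := by field_simp
    linear_combination ((-1 : ℂ)) ^ (n + 1) * A * h1 + ((-1 : ℂ)) ^ (n + 1) * A * h2
  -- negative side summable
  have hzn : (0:ℝ) < ‖z‖ := norm_pos_iff.mpr hz0
  have hGsum : Summable (fun n : ℕ => G (n + 1)) := by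
    apply Summable.of_norm_bounded_eventually_nat (g := fun n => (2 / ‖z‖) * ‖Q‖ ^ n)
      (hgeo.mul_left _)
    have h0 : Tendsto (fun n : ℕ => ‖(Q ^ (n + 1) / z : ℂ)‖) atTop (𝓝 0) := by
      have h1 := (hQpow z⁻¹).comp (tendsto_add_atTop_nat 1)
      apply h1.congr
      intro n
      simp [Function.comp, div_eq_mul_inv, mul_comm]
    have hev : ∀ᶠ n in atTop, ‖(Q ^ (n + 1) / z : ℂ)‖ ≤ 1 / 2 :=
      (h0.eventually_lt_const (by norm_num : (0:ℝ) < 1/2)).mono fun n h => h.le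
    filter_upwards [hev] with n hn
    have hden : (1:ℝ) / 2 ≤ ‖1 - Q ^ (n + 1) / z‖ := by
      have := norm_sub_norm_le (1 : ℂ) (Q ^ (n + 1) / z)
      simp only [norm_one] at this
      linarith
    have hGn : ‖G (n + 1)‖ = ‖Q‖ ^ e ((n + 1 : ℕ) : ℤ) / (‖z‖ * ‖1 - Q ^ (n + 1) / z‖) := by
      simp [hG, norm_div, norm_mul, norm_pow]
    rw [hGn]
    have hle1 : ‖Q‖ ^ e ((n + 1 : ℕ) : ℤ) ≤ ‖Q‖ ^ n := hpowle (le_trans (Nat.le_succ n) (hgrow (n + 1)))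
    calc ‖Q‖ ^ e ((n + 1 : ℕ) : ℤ) / (‖z‖ * ‖1 - Q ^ (n + 1) / z‖)
        ≤ ‖Q‖ ^ e ((n + 1 : ℕ) : ℤ) / (‖z‖ * (1 / 2)) := by
          apply div_le_div_of_nonneg_left (pow_nonneg (norm_nonneg Q) _)
          · positivity
          · exact mul_le_mul_of_nonneg_left hden (norm_nonneg z)
      _ = (2 / ‖z‖) * ‖Q‖ ^ e ((n + 1 : ℕ) : ℤ) := by field_simp
      _ ≤ (2 / ‖z‖) * ‖Q‖ ^ n := by
          apply mul_le_mul_of_nonneg_left hle1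
          positivity
  have hneg : Summable (fun n : ℕ => F (-(n + 1))) := hGsum.congr fun n => (hFG n).symm
  have hFpos : Summable (fun n : ℕ => F (n : ℤ)) := hpos.congr fun n => (hFnat n).symm
  have hpos' : Summable (fun n : ℕ => Fn (n + 1)) := by
    rw [summable_nat_add_iff 1]; exact hpos
  -- pairing identity
  have hpair : ∀ n : ℕ, Fn (n + 1) + G (n + 1) = (1 - z⁻¹) * H (n + 1) := by
    intro n
    simp only [hFn, hG, hH]
    exact pair_aux z (Q ^ (n + 1)) _ _ hz0 (hd1 (n + 1)) (hd2 n)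
  have hHsum : Summable (fun n : ℕ => H (n + 1)) := by
    have h := ((hpos'.add hGsum).mul_left (1 - z⁻¹)⁻¹)
    apply h.congr
    intro n
    rw [hpair n, ← mul_assoc, inv_mul_cancel₀ hzinv, one_mul]
  -- ℕ+ reindexing
  have e1 : ∀ n : ℕ, ((Equiv.pnatEquivNat.symm n : ℕ+) : ℕ) = n + 1 := by
    intro n
    simp [Equiv.pnatEquivNat]
  have hs : Summable (fun n : ℕ+ => H (n : ℕ)) := by
    rw [← Equiv.summable_iff (Equiv.pnatEquivNat.symm)]
    apply hHsum.congr
    intro n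
    simp [e1 n]
  have ht : ∑' n : ℕ+, H (n : ℕ) = ∑' n : ℕ, H (n + 1) := by
    rw [← Equiv.tsum_eq (Equiv.pnatEquivNat.symm) (fun n : ℕ+ => H (n : ℕ))]
    exact tsum_congr fun n => by rw [e1 n]
  refine ⟨hs, ?_⟩
  calc ∑' m : ℤ, F m = (∑' n : ℕ, F (n : ℤ)) + ∑' n : ℕ, F (-(n + 1)) :=
        tsum_of_nat_of_neg_add_one hFpos hneg
    _ = (Fn 0 + ∑' n : ℕ, Fn (n + 1)) + ∑' n : ℕ, G (n + 1) := by
        rw [tsum_congr hFnat, Summable.tsum_eq_zero_add hpos, tsum_congr hFG]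
    _ = 1 / (1 - z) + ∑' n : ℕ, (Fn (n + 1) + G (n + 1)) := by
        rw [Summable.tsum_add hpos' hGsum]
        simp [hFn, he0]
        ring
    _ = 1 / (1 - z) + ∑' n : ℕ, (1 - z⁻¹) * H (n + 1) := by
        rw [tsum_congr hpair]
    _ = 1 / (1 - z) + (1 - z⁻¹) * ∑' n : ℕ, H (n + 1) := by rw [tsum_mul_left]
    _ = 1 / (1 - z) + (1 - z⁻¹) * ∑' n : ℕ+, H (n : ℕ) := by rw [ht]

end Key

lemma final_alg (z PO PE SA SB : ℂ) (hz0 : z ≠ 0) (hz1 : 1 - z ≠ 0) (hzi : 1 - z⁻¹ ≠ 0)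
    (hPO : PO ≠ 0) (hPE : PE ≠ 0) :
    1 / ((1 - z) * (1 - z⁻¹)) *
        ((1 - z) / PE * (1 / (1 - z) + (1 - z⁻¹) * SA)
          - PO * ((1 - z) / (PO * PE) * (1 / (1 - z) + (1 - z⁻¹) * SB)))
      = PE⁻¹ * (SA - SB) := by
  have step1 : PO * ((1 - z) / (PO * PE) * (1 / (1 - z) + (1 - z⁻¹) * SB))
      = (1 - z) / PE * (1 / (1 - z) + (1 - z⁻¹) * SB) := by
    rw [← mul_assoc, mul_div_assoc', mul_div_mul_left _ _ hPO]
  rw [step1]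
  have step2 : (1 - z) / PE * (1 / (1 - z) + (1 - z⁻¹) * SA)
        - (1 - z) / PE * (1 / (1 - z) + (1 - z⁻¹) * SB)
      = (1 - z) / PE * ((1 - z⁻¹) * (SA - SB)) := by ring
  rw [step2]
  rw [one_div, mul_inv, div_eq_mul_inv]
  have h1 : (1 - z)⁻¹ * (1 - z) = 1 := inv_mul_cancel₀ hz1
  have h2 : (1 - z⁻¹)⁻¹ * (1 - z⁻¹) = 1 := inv_mul_cancel₀ hzi
  calc (1 - z)⁻¹ * (1 - z⁻¹)⁻¹ * ((1 - z) * PE⁻¹ * ((1 - z⁻¹) * (SA - SB)))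
      = ((1 - z)⁻¹ * (1 - z)) * ((1 - z⁻¹)⁻¹ * (1 - z⁻¹)) * (PE⁻¹ * (SA - SB)) := by ring
    _ = PE⁻¹ * (SA - SB) := by rw [h1, h2, one_mul, one_mul]


/-- The rank generating function `R(z,q)` via its standard Lambert series expansion
`R(z,q) = (1-z)/(q;q)_∞ ∑_{n∈ℤ} (-1)ⁿ q^{n(3n+1)/2}/(1-zqⁿ)`. -/
noncomputable def Rfun (z q : ℂ) : ℂ :=
  (1 - z) / (∏' n : ℕ, (1 - q ^ (n + 1))) *
    ∑' n : ℤ, (-1 : ℂ) ^ n * q ^ (n * (3 * n + 1) / 2).toNat / (1 - z * q ^ n)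

/-- The crank generating function `C(z,q)` via its standard Lambert series expansion
`C(z,q) = (1-z)/(q;q)_∞ ∑_{n∈ℤ} (-1)ⁿ q^{n(n+1)/2}/(1-zqⁿ)`. -/
noncomputable def Cfun (z q : ℂ) : ℂ :=
  (1 - z) / (∏' n : ℕ, (1 - q ^ (n + 1))) *
    ∑' n : ℤ, (-1 : ℂ) ^ n * q ^ (n * (n + 1) / 2).toNat / (1 - z * q ^ n)

set_option maxHeartbeats 1000000 in
theorem stmt17 (τ z₀ : ℂ) (hτ : 0 < τ.im) (hz₀ : z₀ ≠ 0) (hz₁ : z₀ ≠ 1)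
    (q : ℂ) (hq : q = Complex.exp (2 * Real.pi * Complex.I * τ))
    (hden : ∀ n : ℕ+, z₀ * q ^ (n : ℕ) ≠ 1 ∧ q ^ (n : ℕ) / z₀ ≠ 1) :
    1 / ((1 - z₀) * (1 - z₀⁻¹)) *
        (Rfun z₀ (q ^ 2) - (∏' k : ℕ, (1 - q * (q ^ 2) ^ k)) * Cfun z₀ q) =
      (∏' k : ℕ, (1 - q ^ (2 * k + 2)))⁻¹ *
        ∑' n : ℕ+, (-1 : ℂ) ^ ((n : ℕ) - 1) *
          (q ^ ((n : ℕ) * ((n : ℕ) + 1) / 2) * (1 + q ^ (n : ℕ)) /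
              ((1 - z₀ * q ^ (n : ℕ)) * (1 - q ^ (n : ℕ) / z₀)) -
            q ^ (3 * (n : ℕ) ^ 2 + (n : ℕ)) * (1 + q ^ (2 * (n : ℕ))) /
              ((1 - z₀ * q ^ (2 * (n : ℕ))) * (1 - q ^ (2 * (n : ℕ)) / z₀))) := by
  -- basic facts about q
  have hq1 : ‖q‖ < 1 := by
    rw [hq, Complex.norm_exp]
    have hre : (2 * (Real.pi : ℂ) * Complex.I * τ).re = -(2 * Real.pi * τ.im) := by
      simp [Complex.mul_re, Complex.mul_im]
    rw [hre, Real.exp_lt_one_iff]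
    have hpi := Real.pi_pos
    nlinarith
  have hq0 : q ≠ 0 := by rw [hq]; exact Complex.exp_ne_zero _
  have hq2_1 : ‖q ^ 2‖ < 1 := by
    rw [norm_pow]
    exact pow_lt_one₀ (norm_nonneg q) hq1 two_ne_zero
  have hq2_0 : q ^ 2 ≠ 0 := pow_ne_zero 2 hq0
  -- denominators are nonzero
  have hd1C : ∀ n : ℕ, 1 - z₀ * q ^ n ≠ 0 := by
    intro n
    match n with
    | 0 => simpa using sub_ne_zero.mpr (Ne.symm hz₁)
    | (k+1) => exact sub_ne_zero.mpr (Ne.symm (hden ⟨k+1, Nat.succ_pos k⟩).1)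
  have hd2C : ∀ n : ℕ, 1 - q ^ (n + 1) / z₀ ≠ 0 := fun n =>
    sub_ne_zero.mpr (Ne.symm (hden ⟨n+1, Nat.succ_pos n⟩).2)
  have hd1R : ∀ n : ℕ, 1 - z₀ * (q ^ 2) ^ n ≠ 0 := by
    intro n
    rw [← pow_mul]
    match n with
    | 0 => simpa using sub_ne_zero.mpr (Ne.symm hz₁)
    | (k+1) => exact sub_ne_zero.mpr (Ne.symm (hden ⟨2*(k+1), by omega⟩).1)
  have hd2R : ∀ n : ℕ, 1 - (q ^ 2) ^ (n + 1) / z₀ ≠ 0 := by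
    intro n
    rw [← pow_mul]
    exact sub_ne_zero.mpr (Ne.symm (hden ⟨2*(n+1), by omega⟩).2)
  -- instantiate the key lemma
  have keyR := key (z := z₀) (Q := q ^ 2) hq2_1 hq2_0 hz₀ hd1R hd2R
      (fun m => (m * (3 * m + 1) / 2).toNat) (by norm_num) eR_sym eR_grow
  have keyC := key (z := z₀) (Q := q) hq1 hq0 hz₀ hd1C hd2C
      (fun m => (m * (m + 1) / 2).toNat) (by norm_num) eC_sym eC_grow
  beta_reduce at keyR keyC
  -- convert the RHS series to the difference of the two key series
  have hTpt : ∀ n : ℕ+, (-1 : ℂ) ^ ((n : ℕ) - 1) *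
          (q ^ ((n : ℕ) * ((n : ℕ) + 1) / 2) * (1 + q ^ (n : ℕ)) /
              ((1 - z₀ * q ^ (n : ℕ)) * (1 - q ^ (n : ℕ) / z₀)) -
            q ^ (3 * (n : ℕ) ^ 2 + (n : ℕ)) * (1 + q ^ (2 * (n : ℕ))) /
              ((1 - z₀ * q ^ (2 * (n : ℕ))) * (1 - q ^ (2 * (n : ℕ)) / z₀)))
      = (-1 : ℂ) ^ (n : ℕ) *
          ((q ^ 2) ^ (((n : ℕ) : ℤ) * (3 * ((n : ℕ) : ℤ) + 1) / 2).toNat * (1 + (q ^ 2) ^ (n : ℕ)) /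
            ((1 - z₀ * (q ^ 2) ^ (n : ℕ)) * (1 - (q ^ 2) ^ (n : ℕ) / z₀)))
        - (-1 : ℂ) ^ (n : ℕ) *
          (q ^ (((n : ℕ) : ℤ) * (((n : ℕ) : ℤ) + 1) / 2).toNat * (1 + q ^ (n : ℕ)) /
            ((1 - z₀ * q ^ (n : ℕ)) * (1 - q ^ (n : ℕ) / z₀))) := by
    intro n
    obtain ⟨k, hk⟩ : ∃ k, (n : ℕ) = k + 1 := ⟨(n : ℕ) - 1, by have := n.pos; omega⟩
    rw [hk]
    simp only [← pow_mul, eR_nat, eC_nat, eR_double, Nat.add_sub_cancel]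
    ring
  rw [tsum_congr hTpt, Summable.tsum_sub keyR.1 keyC.1]
  -- rewrite the generating functions via the key identities
  rw [Rfun, Cfun, keyR.2, keyC.2]
  -- products
  have sum_geo2 : Summable fun k : ℕ => (q ^ 2) ^ k := summable_geometric_of_norm_lt_one hq2_1
  have hOdd := tprod_one_sub (f := fun k : ℕ => q ^ (2 * k + 1))
    (by
      apply (sum_geo2.mul_left q).congr
      intro k
      rw [← pow_mul, ← pow_succ']) 
    (fun k => by
      rw [norm_pow]
      exact pow_lt_one₀ (norm_nonneg q) hq1 (by omega))
  have hEven := tprod_one_sub (f := fun k : ℕ => q ^ (2 * k + 2))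
    (by
      apply (sum_geo2.mul_left (q ^ 2)).congr
      intro k
      rw [← pow_mul, ← pow_add]
      ring_nf)
    (fun k => by
      rw [norm_pow]
      exact pow_lt_one₀ (norm_nonneg q) hq1 (by omega))
  have hsplitf : (∏' k : ℕ, (1 - q ^ (2 * k + 1))) * (∏' k : ℕ, (1 - q ^ (2 * k + 2)))
      = ∏' n : ℕ, (1 - q ^ (n + 1)) := by
    have h22 : (∏' k : ℕ, (1 - q ^ (2 * k + 2))) = ∏' k : ℕ, (1 - q ^ (2 * k + 1 + 1)) :=
      tprod_congr fun k => by norm_num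
    rw [h22]
    have hm1 : Multipliable fun k : ℕ => (fun n : ℕ => 1 - q ^ (n + 1)) (2 * k) := hOdd.1
    have hm2 : Multipliable fun k : ℕ => (fun n : ℕ => 1 - q ^ (n + 1)) (2 * k + 1) :=
      hEven.1.congr fun k => by norm_num
    exact tprod_even_mul_odd (f := fun n : ℕ => 1 - q ^ (n + 1)) hm1 hm2
  have hPR : (∏' n : ℕ, (1 - (q ^ 2) ^ (n + 1))) = ∏' k : ℕ, (1 - q ^ (2 * k + 2)) :=
    tprod_congr fun n => by rw [← pow_mul, Nat.mul_add, Nat.mul_one]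
  have hP3 : (∏' k : ℕ, (1 - q * (q ^ 2) ^ k)) = ∏' k : ℕ, (1 - q ^ (2 * k + 1)) :=
    tprod_congr fun k => by rw [← pow_mul, ← pow_succ']
  rw [hPR, hP3, ← hsplitf]
  -- final algebra
  have hz1 : (1 : ℂ) - z₀ ≠ 0 := by simpa using hd1C 0
  have hzi : (1 : ℂ) - z₀⁻¹ ≠ 0 := by
    have h : (1 : ℂ) - z₀⁻¹ = -(1 - z₀) / z₀ := by field_simp; ring
    rw [h]
    exact div_ne_zero (neg_ne_zero.mpr hz1) hz₀
  exact final_alg z₀ _ _ _ _ hz₀ hz1 hzi hOdd.2 hEven.2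
end
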